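/- arXiv:2603.25890 — 3 statements merged into one kernel-verified Lean document; each statement's English description precedes it below -/
import Mathlib

section
/- Let P : ℝⁿ → Matrix (Fin m) (Fin m) ℝ be a map such that each entry of P(x) is a polynomial in the coordinates of x, and suppose P(x) is upper triangular unipotent for all x. Then there exists a polynomial R : ℝ → ℝ, nondecreasing on [0,∞), such that for all x ∈ ℝⁿ and all v ∈ ℝ^m, ‖P(x) v‖ ≤ R(‖x‖) · ‖v‖ and ‖v‖ ≤ R(‖x‖) · ‖P(x) v‖. -/
open Polynomial in
/-- Polynomials with nonnegative coefficients. -/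
def AuxPosCoeff (R : Polynomial ℝ) : Prop := ∀ k, 0 ≤ R.coeff k

lemma AuxPosCoeff.eval_nonneg {R : Polynomial ℝ} (h : AuxPosCoeff R) {t : ℝ} (ht : 0 ≤ t) :
    0 ≤ R.eval t := by
  rw [Polynomial.eval_eq_sum_range]
  exact Finset.sum_nonneg fun k _ => mul_nonneg (h k) (pow_nonneg ht k)

lemma AuxPosCoeff.mono {R : Polynomial ℝ} (h : AuxPosCoeff R) :
    MonotoneOn (fun t => R.eval t) (Set.Ici (0 : ℝ)) := by
  intro a ha b _ hab
  simp only
  rw [Polynomial.eval_eq_sum_range, Polynomial.eval_eq_sum_range]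
  exact Finset.sum_le_sum fun k _ =>
    mul_le_mul_of_nonneg_left (pow_le_pow_left₀ ha hab k) (h k)

lemma AuxPosCoeff.add {R S : Polynomial ℝ} (hR : AuxPosCoeff R) (hS : AuxPosCoeff S) :
    AuxPosCoeff (R + S) := fun k => by
  rw [Polynomial.coeff_add]; exact add_nonneg (hR k) (hS k)

lemma AuxPosCoeff.sum {ι : Type*} (s : Finset ι) (f : ι → Polynomial ℝ)
    (h : ∀ i ∈ s, AuxPosCoeff (f i)) : AuxPosCoeff (∑ i ∈ s, f i) := by
  classical
  induction s using Finset.induction with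
  | empty => intro k; simp
  | insert _ _ hx ih =>
    rw [Finset.sum_insert hx]
    exact (h _ (Finset.mem_insert_self _ _)).add
      (ih fun i hi => h i (Finset.mem_insert_of_mem hi))

lemma AuxPosCoeff.monomial (c : ℝ) (hc : 0 ≤ c) (d : ℕ) :
    AuxPosCoeff (Polynomial.C c * Polynomial.X ^ d) := fun k => by
  rw [Polynomial.coeff_C_mul, Polynomial.coeff_X_pow]
  positivity

lemma aux_abs_coord {N : ℕ} (v : EuclideanSpace ℝ (Fin N)) (i : Fin N) : |v i| ≤ ‖v‖ := by
  rw [EuclideanSpace.norm_eq, ← Real.sqrt_sq_eq_abs]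
  apply Real.sqrt_le_sqrt
  simpa using Finset.single_le_sum (f := fun j => v j ^ 2)
    (fun j _ => sq_nonneg (v j)) (Finset.mem_univ i)

lemma aux_norm_le_sum {N : ℕ} (w : Fin N → ℝ) :
    ‖(EuclideanSpace.equiv (Fin N) ℝ).symm w‖ ≤ ∑ i, |w i| := by
  have hw : (EuclideanSpace.equiv (Fin N) ℝ).symm w
      = ∑ i, w i • EuclideanSpace.single i (1 : ℝ) := by
    ext j
    classical
    rw [show ((∑ i, w i • EuclideanSpace.single i (1:ℝ)) j) = ∑ i, (w i • EuclideanSpace.single i (1:ℝ)) j from by rw [WithLp.ofLp_sum, Finset.sum_apply]]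
    simp [EuclideanSpace.single_apply, Finset.sum_ite_eq']
  rw [hw]
  refine (norm_sum_le _ _).trans_eq ?_
  congr 1; ext i
  rw [norm_smul, EuclideanSpace.norm_single]
  simp


lemma aux_poly_bound {n : ℕ} (q : MvPolynomial (Fin n) ℝ) :
    ∃ R : Polynomial ℝ, AuxPosCoeff R ∧
      ∀ x : EuclideanSpace ℝ (Fin n), |MvPolynomial.eval (fun k => x k) q| ≤ R.eval ‖x‖ := by
  classical
  refine ⟨∑ s ∈ q.support, Polynomial.C |MvPolynomial.coeff s q|
      * Polynomial.X ^ (s.sum fun _ e => e), ?_, ?_⟩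
  · exact AuxPosCoeff.sum _ _ fun s _ => AuxPosCoeff.monomial _ (abs_nonneg _) _
  · intro x
    conv_lhs => rw [q.as_sum]
    rw [map_sum]
    refine (Finset.abs_sum_le_sum_abs _ _).trans ?_
    rw [Polynomial.eval_finset_sum]
    refine Finset.sum_le_sum fun s _ => ?_
    rw [MvPolynomial.eval_monomial, Polynomial.eval_mul, Polynomial.eval_C,
      Polynomial.eval_pow, Polynomial.eval_X, abs_mul]
    refine mul_le_mul_of_nonneg_left ?_ (abs_nonneg _)
    rw [Finsupp.prod, Finsupp.sum, Finset.abs_prod, ← Finset.prod_pow_eq_pow_sum]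
    refine Finset.prod_le_prod (fun k _ => abs_nonneg _) fun k _ => ?_
    rw [abs_pow]
    exact pow_le_pow_left₀ (abs_nonneg _) (aux_abs_coord x k) _


lemma aux_mat_bound {n N : ℕ} (M : EuclideanSpace ℝ (Fin n) → Matrix (Fin N) (Fin N) ℝ)
    (Q : Fin N → Fin N → MvPolynomial (Fin n) ℝ)
    (h : ∀ x i j, M x i j = MvPolynomial.eval (fun k => x k) (Q i j)) :
    ∃ R : Polynomial ℝ, AuxPosCoeff R ∧
      ∀ (x : EuclideanSpace ℝ (Fin n)) (v : EuclideanSpace ℝ (Fin N)),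
        ‖(EuclideanSpace.equiv (Fin N) ℝ).symm ((M x).mulVec v)‖ ≤ R.eval ‖x‖ * ‖v‖ := by
  classical
  choose R hRpos hRbound using fun i j => aux_poly_bound (Q i j)
  refine ⟨∑ i, ∑ j, R i j, AuxPosCoeff.sum _ _ fun i _ =>
    AuxPosCoeff.sum _ _ fun j _ => hRpos i j, fun x v => ?_⟩
  refine (aux_norm_le_sum _).trans ?_
  have hb : ∀ i : Fin N, |(M x).mulVec v i| ≤ (∑ j, Polynomial.eval ‖x‖ (R i j)) * ‖v‖ := by
    intro i
    rw [Matrix.mulVec, dotProduct, Finset.sum_mul]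
    refine (Finset.abs_sum_le_sum_abs _ _).trans (Finset.sum_le_sum fun j _ => ?_)
    rw [abs_mul]
    have h1 : |M x i j| ≤ Polynomial.eval ‖x‖ (R i j) := by rw [h]; exact hRbound i j x
    exact mul_le_mul h1 (aux_abs_coord v j) (abs_nonneg _)
      ((abs_nonneg _).trans h1)
  refine (Finset.sum_le_sum fun i _ => hb i).trans_eq ?_
  rw [← Finset.sum_mul]
  congr 1
  rw [Polynomial.eval_finset_sum]
  exact Finset.sum_congr rfl fun i _ => (Polynomial.eval_finset_sum _ _ _).symm


theorem stmt_3 (n m : ℕ) (P : EuclideanSpace ℝ (Fin n) → Matrix (Fin m) (Fin m) ℝ)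
    (Q : Fin m → Fin m → MvPolynomial (Fin n) ℝ)
    (hpoly : ∀ x i j, P x i j = MvPolynomial.eval (fun k => x k) (Q i j))
    (hupper : ∀ x, (P x).BlockTriangular id) (hdiag : ∀ x i, P x i i = 1) :
    ∃ R : Polynomial ℝ, MonotoneOn (fun t => R.eval t) (Set.Ici (0 : ℝ)) ∧
      ∀ (x : EuclideanSpace ℝ (Fin n)) (v : EuclideanSpace ℝ (Fin m)),
        ‖(EuclideanSpace.equiv (Fin m) ℝ).symm ((P x).mulVec v)‖ ≤ R.eval ‖x‖ * ‖v‖ ∧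
        ‖v‖ ≤ R.eval ‖x‖ * ‖(EuclideanSpace.equiv (Fin m) ℝ).symm ((P x).mulVec v)‖ := by
  classical
  set QM : Matrix (Fin m) (Fin m) (MvPolynomial (Fin n) ℝ) := Matrix.of fun i j => Q i j with hQM
  have hadj : ∀ (x : EuclideanSpace ℝ (Fin n)) i j, (P x).adjugate i j
      = MvPolynomial.eval (fun k => x k) (QM.adjugate i j) := by
    intro x i j
    have hmap : (MvPolynomial.eval (fun k => x k)).mapMatrix QM = P x := by
      ext a b
      simp [hQM, hpoly]
    rw [← hmap, ← RingHom.map_adjugate]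
    rfl
  obtain ⟨R1, hR1pos, hR1⟩ := aux_mat_bound P Q hpoly
  obtain ⟨R2, hR2pos, hR2⟩ := aux_mat_bound (fun x => (P x).adjugate)
    (fun i j => QM.adjugate i j) hadj
  refine ⟨R1 + R2, (hR1pos.add hR2pos).mono, fun x v => ?_⟩
  have hx : (0:ℝ) ≤ ‖x‖ := norm_nonneg x
  have e1 := hR1pos.eval_nonneg hx
  have e2 := hR2pos.eval_nonneg hx
  have hdet : (P x).det = 1 := by
    rw [Matrix.det_of_upperTriangular (hupper x)]
    simp [hdiag]
  have hinv : (P x).adjugate.mulVec ((P x).mulVec v) = v := by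
    rw [Matrix.mulVec_mulVec, Matrix.adjugate_mul, hdet]
    simp
  rw [Polynomial.eval_add]
  constructor
  · refine (hR1 x v).trans ?_
    nlinarith [norm_nonneg v]
  · have h2 := hR2 x ((EuclideanSpace.equiv (Fin m) ℝ).symm ((P x).mulVec v))
    have hv : (EuclideanSpace.equiv (Fin m) ℝ).symm
        ((fun x => (P x).adjugate) x |>.mulVec
          ((EuclideanSpace.equiv (Fin m) ℝ).symm ((P x).mulVec v))) = v := by
      show (EuclideanSpace.equiv (Fin m) ℝ).symm ((P x).adjugate.mulVec ((P x).mulVec v)) = v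
      rw [hinv]
      rfl
    rw [hv] at h2
    refine h2.trans ?_
    nlinarith [norm_nonneg ((EuclideanSpace.equiv (Fin m) ℝ).symm ((P x).mulVec v))]
end

section
/- Let σ : Δᵏ → ℝⁿ be a Lipschitz map from the standard k-simplex, and define the cone Σ : Δ^{k+1} → ℝⁿ by Σ(t·x̄) = t·σ(x̄) for x̄ ∈ Δᵏ ⊂ ℝ^{k} (viewing Δ^{k+1} as the cone on Δᵏ with apex 0), Σ(0) = 0. If the image of σ is contained in the ball B(0, D), then the (k+1)-dimensional Hausdorff measure (mass) of Σ satisfies mass(Σ) ≤ D · mass(σ), and the image of Σ is contained in B(0, D). -/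
open MeasureTheory

/-- The standard full-dimensional simplex in ℝᵏ with vertices 0, e₁, …, e_k. -/
def stdCone (k : ℕ) : Set (Fin k → ℝ) := {x | (∀ i, 0 ≤ x i) ∧ ∑ i, x i ≤ 1}

/-- ‖Λᵏ f‖, the k-Jacobian of a linear map ℝᵏ → ℝⁿ, via the Gram determinant. -/
noncomputable def jacNorm {k n : ℕ} (f : (Fin k → ℝ) →L[ℝ] EuclideanSpace ℝ (Fin n)) : ℝ :=
  Real.sqrt (Matrix.det (Matrix.of fun i j =>
    (inner ℝ (f (Pi.single i 1 : Fin k → ℝ)) (f (Pi.single j 1 : Fin k → ℝ)) : ℝ)))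

/-- mass(σ) = ∫_{Δᵏ} ‖Λᵏ dσ(x)‖ dλ_k(x), the area-formula mass of a Lipschitz
singular simplex σ : Δᵏ → ℝⁿ. -/
noncomputable def simplexMass {k n : ℕ} (σ : (Fin k → ℝ) → EuclideanSpace ℝ (Fin n)) : ℝ :=
  ∫ x in stdCone k, jacNorm (fderiv ℝ σ x)

/-- The cone over σ with apex the origin, (t, x̄) ↦ t·σ(x̄), parametrized over
the cone domain {y : y₀ ∈ [0,1], (y₁,…,y_k) ∈ Δᵏ} ⊆ ℝ^{k+1}. -/
noncomputable def coneMap {k n : ℕ} (σ : (Fin k → ℝ) → EuclideanSpace ℝ (Fin n)) :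
    (Fin (k + 1) → ℝ) → EuclideanSpace ℝ (Fin n) :=
  fun y => (y 0) • σ (fun i => y i.succ)

/-- The domain of the cone parametrization. -/
def coneDomain (k : ℕ) : Set (Fin (k + 1) → ℝ) :=
  {y | y 0 ∈ Set.Icc (0 : ℝ) 1 ∧ (fun i => y i.succ) ∈ stdCone k}

namespace StmtAux

open Matrix

/-! ### Gram matrices -/

noncomputable def gram {ι : Type*} [Fintype ι] {E : Type*} [NormedAddCommGroup E]
    [InnerProductSpace ℝ E] (v : ι → E) : Matrix ι ι ℝ :=
  Matrix.of fun i j => inner ℝ (v i) (v j)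

lemma posSemidef_gram {ι : Type*} [Fintype ι] [DecidableEq ι] {E : Type*} [NormedAddCommGroup E]
    [InnerProductSpace ℝ E] (v : ι → E) : (gram v).PosSemidef := by
  refine Matrix.PosSemidef.of_dotProduct_mulVec_nonneg ?_ ?_
  · ext i j
    simp [gram, Matrix.conjTranspose_apply, real_inner_comm]
  · intro x
    have : (star x) ⬝ᵥ (gram v).mulVec x = ‖∑ i, x i • v i‖ ^ 2 := by
      rw [dotProduct, @norm_sq_eq_re_inner ℝ]
      simp only [Matrix.mulVec, dotProduct, gram, Matrix.of_apply]
      rw [sum_inner]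
      congr 1
      ext i
      rw [inner_sum, Finset.mul_sum]
      simp [real_inner_smul_left, real_inner_smul_right, star, mul_comm, mul_assoc, mul_left_comm]
    rw [this]
    positivity

lemma det_gram_nonneg {ι : Type*} [Fintype ι] [DecidableEq ι] {E : Type*} [NormedAddCommGroup E]
    [InnerProductSpace ℝ E] (v : ι → E) : 0 ≤ (gram v).det := by
  exact (posSemidef_gram v).det_nonneg

variable {k n : ℕ}

lemma det_gram_cons_le {E : Type*} [NormedAddCommGroup E] [InnerProductSpace ℝ E]
    (v : Fin (k + 1) → E) :
    (gram v).det ≤ ‖v 0‖ ^ 2 * (gram fun i : Fin k => v i.succ).det := by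
  classical
  set w : Fin k → E := fun i => v i.succ with hw
  set S : Submodule ℝ E := Submodule.span ℝ (Set.range w) with hS
  haveI : FiniteDimensional ℝ S := FiniteDimensional.span_of_finite ℝ (Set.finite_range w)
  obtain ⟨c, hc⟩ := Submodule.mem_span_range_iff_exists_fun ℝ |>.mp
    (Submodule.coe_mem (S.orthogonalProjectionOnto (v 0)))
  set u : E := v 0 - ∑ i, c i • w i with hu
  have huorth : ∀ x ∈ S, (inner ℝ u x : ℝ) = 0 := by
    intro x hx
    have h1 : v 0 - (S.orthogonalProjectionOnto (v 0) : E) ∈ Sᗮ :=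
      Submodule.sub_starProjection_mem_orthogonal (v 0)
    have : u = v 0 - (S.orthogonalProjectionOnto (v 0) : E) := by rw [hu, hc]
    rw [this]
    exact (Submodule.mem_orthogonal' S _).mp h1 x hx
  have huw : ∀ i, (inner ℝ u (w i) : ℝ) = 0 := fun i =>
    huorth _ (Submodule.subset_span ⟨i, rfl⟩)
  have hu_le : ‖u‖ ≤ ‖v 0‖ := by
    have hdecomp : v 0 = u + ∑ i, c i • w i := by rw [hu]; abel
    have hperp : (inner ℝ u (∑ i, c i • w i) : ℝ) = 0 :=
      huorth _ (hc ▸ Submodule.coe_mem _)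
    have : ‖v 0‖ ^ 2 = ‖u‖ ^ 2 + ‖∑ i, c i • w i‖ ^ 2 := by
      rw [hdecomp, norm_add_sq_real, hperp]; ring
    nlinarith [norm_nonneg u, norm_nonneg (v 0), sq_nonneg ‖∑ i, c i • w i‖]
  set vv : Fin (k + 1) → E := Fin.cons u w with hvv
  set L : Matrix (Fin (k + 1)) (Fin (k + 1)) ℝ :=
    Matrix.of (Fin.cons (Fin.cons 1 fun j => -c j) fun i => Pi.single i.succ 1) with hL
  have hvveq : ∀ i, vv i = ∑ a, L i a • v a := by
    intro i
    refine Fin.cases ?_ ?_ i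
    · rw [Fin.sum_univ_succ]
      simp only [hvv, hL, Matrix.of_apply, Fin.cons_zero, Fin.cons_succ, hu]
      rw [sub_eq_add_neg, ← Finset.sum_neg_distrib]
      simp [neg_smul]
      rfl
    · intro i
      simp only [hvv, hL, Matrix.of_apply, Fin.cons_succ]
      rw [Finset.sum_eq_single i.succ]
      · simp; rfl
      · intro b _ hb; simp [Pi.single_apply, hb.symm]
      · simp
  have hdetL : L.det = 1 := by
    have hbt : L.BlockTriangular id := by
      intro i j hij
      refine Fin.cases ?_ ?_ i hij
      · intro h
        exact absurd h (by simp [id])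
      · intro i hij
        simp only [hL, Matrix.of_apply, Fin.cons_succ]
        rw [Pi.single_apply, if_neg]
        intro h
        rw [h] at hij
        exact lt_irrefl _ hij
    rw [Matrix.det_of_upperTriangular hbt]
    rw [Finset.prod_eq_one]
    intro i _
    refine Fin.cases ?_ ?_ i <;> simp [hL]
  have hgram : gram vv = L * gram v * Lᵀ := by
    ext i j
    rw [Matrix.mul_apply]
    have hrow : ∀ b, (L * gram v) i b = (inner ℝ (vv i) (v b) : ℝ) := by
      intro b
      rw [Matrix.mul_apply, hvveq i, sum_inner]
      congr 1; ext a
      rw [real_inner_smul_left]; rfl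
    calc (gram vv) i j = inner ℝ (vv i) (vv j) := rfl
      _ = inner ℝ (vv i) (∑ b, L j b • v b) := by rw [← hvveq]
      _ = ∑ b, (L * gram v) i b * Lᵀ b j := by
          rw [inner_sum]
          congr 1; ext b
          rw [real_inner_smul_right, hrow, Matrix.transpose_apply]; ring
  have hdet_eq : (gram vv).det = (gram v).det := by
    rw [hgram, Matrix.det_mul, Matrix.det_mul, Matrix.det_transpose, hdetL]
    ring
  have hcross : ∀ j : Fin k, (gram vv) 0 j.succ = 0 := by
    intro j
    simpa [gram, hvv] using huw j
  have hexp : (gram vv).det = ‖u‖ ^ 2 * (gram w).det := by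
    rw [Matrix.det_succ_row_zero, Fin.sum_univ_succ]
    have h00 : (gram vv) 0 0 = ‖u‖ ^ 2 := by
      simp only [gram, Matrix.of_apply, hvv, Fin.cons_zero]
      rw [real_inner_self_eq_norm_sq]
    have hsub : (gram vv).submatrix Fin.succ (Fin.succAbove 0) = gram w := by
      ext i j
      simp [gram, hvv, Matrix.submatrix_apply, Fin.zero_succAbove]
    rw [h00, hsub]
    have hz : ∀ j : Fin k,
        (-1 : ℝ) ^ ((j.succ : Fin (k+1)) : ℕ) * (gram vv) 0 j.succ *
          ((gram vv).submatrix Fin.succ (Fin.succAbove j.succ)).det = 0 := by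
      intro j
      rw [hcross j]
      ring
    rw [Finset.sum_congr rfl (fun j _ => hz j), Finset.sum_const, smul_zero]
    simp
  rw [← hdet_eq, hexp]
  have hdw : (0:ℝ) ≤ (gram w).det := det_gram_nonneg w
  have hsq : ‖u‖ ^ 2 ≤ ‖v 0‖ ^ 2 := by nlinarith [norm_nonneg u]
  exact mul_le_mul_of_nonneg_right hsq hdw

/-! ### jacNorm lemmas -/

lemma jacNorm_eq (f : (Fin k → ℝ) →L[ℝ] EuclideanSpace ℝ (Fin n)) :
    jacNorm f = Real.sqrt (gram fun i => f (Pi.single i 1)).det := rfl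

lemma jacNorm_nonneg (f : (Fin k → ℝ) →L[ℝ] EuclideanSpace ℝ (Fin n)) : 0 ≤ jacNorm f :=
  Real.sqrt_nonneg _

lemma jacNorm_zero_succ : jacNorm (0 : (Fin (k+1) → ℝ) →L[ℝ] EuclideanSpace ℝ (Fin n)) = 0 := by
  rw [jacNorm_eq]
  have : (gram fun i : Fin (k+1) => (0 : (Fin (k+1) → ℝ) →L[ℝ] EuclideanSpace ℝ (Fin n))
      (Pi.single i 1)) = 0 := by
    ext i j; simp [gram]
  rw [this, Matrix.det_zero, Real.sqrt_zero]

lemma abs_det_le (M : Matrix (Fin k) (Fin k) ℝ) (C : ℝ)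
    (h : ∀ i j, |M i j| ≤ C) : |M.det| ≤ (k.factorial : ℝ) * C ^ k := by
  rw [Matrix.det_apply]
  calc |∑ σ : Equiv.Perm (Fin k), Equiv.Perm.sign σ • ∏ i, M (σ i) i|
      ≤ ∑ σ : Equiv.Perm (Fin k), |Equiv.Perm.sign σ • ∏ i, M (σ i) i| :=
        Finset.abs_sum_le_sum_abs _ _
    _ ≤ ∑ _σ : Equiv.Perm (Fin k), C ^ k := by
        refine Finset.sum_le_sum fun σ _ => ?_
        have habs : |Equiv.Perm.sign σ • ∏ i, M (σ i) i| = |∏ i, M (σ i) i| := by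
          rcases Int.units_eq_one_or (Equiv.Perm.sign σ) with h1 | h1 <;>
            rw [Units.smul_def, h1] <;> simp
        rw [habs, Finset.abs_prod]
        calc ∏ i, |M (σ i) i| ≤ ∏ _i : Fin k, C :=
              Finset.prod_le_prod (fun i _ => abs_nonneg _) (fun i _ => h _ _)
          _ = C ^ k := by simp
    _ = (k.factorial : ℝ) * C ^ k := by
        rw [Finset.sum_const, Finset.card_univ, Fintype.card_perm, Fintype.card_fin,
          nsmul_eq_mul]

lemma jacNorm_le (f : (Fin k → ℝ) →L[ℝ] EuclideanSpace ℝ (Fin n)) (C : ℝ) (hC : 0 ≤ C)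
    (h : ‖f‖ ≤ C) : jacNorm f ≤ Real.sqrt ((k.factorial : ℝ) * C ^ (2 * k)) := by
  rw [jacNorm_eq]
  apply Real.sqrt_le_sqrt
  have hent : ∀ i j : Fin k, |(gram fun i => f (Pi.single i 1)) i j| ≤ C ^ 2 := by
    intro i j
    have hb : ∀ i : Fin k, ‖f (Pi.single i 1)‖ ≤ C := by
      intro i
      calc ‖f (Pi.single i 1)‖ ≤ ‖f‖ * ‖(Pi.single i 1 : Fin k → ℝ)‖ := f.le_opNorm _
        _ ≤ C * 1 := by
            rw [Pi.norm_single]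
            exact mul_le_mul h (by norm_num) (by norm_num) hC
        _ = C := mul_one C
    calc |(inner ℝ (f (Pi.single i 1)) (f (Pi.single j 1)) : ℝ)|
        ≤ ‖f (Pi.single i 1)‖ * ‖f (Pi.single j 1)‖ := abs_real_inner_le_norm _ _
      _ ≤ C * C := mul_le_mul (hb i) (hb j) (norm_nonneg _) hC
      _ = C ^ 2 := (sq C).symm
  calc (gram fun i => f (Pi.single i 1)).det ≤ |(gram fun i => f (Pi.single i 1)).det| :=
        le_abs_self _
    _ ≤ (k.factorial : ℝ) * (C ^ 2) ^ k := abs_det_le _ _ hent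
    _ = (k.factorial : ℝ) * C ^ (2 * k) := by rw [← pow_mul]

lemma continuous_jacNorm : Continuous (jacNorm (k := k) (n := n)) := by
  apply Real.continuous_sqrt.comp
  apply Continuous.matrix_det
  apply continuous_matrix
  intro i j
  exact Continuous.inner
    ((ContinuousLinearMap.apply ℝ (EuclideanSpace ℝ (Fin n)) (Pi.single i 1 : Fin k → ℝ)).continuous)
    ((ContinuousLinearMap.apply ℝ (EuclideanSpace ℝ (Fin n)) (Pi.single j 1 : Fin k → ℝ)).continuous)

/-! ### derivative of the cone map -/

noncomputable def tailL : (Fin (k + 1) → ℝ) →L[ℝ] (Fin k → ℝ) :=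
  ContinuousLinearMap.pi fun i => ContinuousLinearMap.proj i.succ

@[simp] lemma tailL_apply (y : Fin (k+1) → ℝ) : tailL y = fun i => y i.succ := rfl

lemma hasFDerivAt_coneMap (σ : (Fin k → ℝ) → EuclideanSpace ℝ (Fin n))
    (y : Fin (k+1) → ℝ) (hσ : DifferentiableAt ℝ σ (fun i => y i.succ)) :
    HasFDerivAt (coneMap σ)
      ((y 0) • ((fderiv ℝ σ (fun i => y i.succ)).comp tailL) +
        (ContinuousLinearMap.proj (R := ℝ) (φ := fun _ : Fin (k+1) => ℝ) 0).smulRight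
          (σ (fun i => y i.succ))) y := by
  have h1 : HasFDerivAt (fun y' : Fin (k+1) → ℝ => y' 0)
      (ContinuousLinearMap.proj (R := ℝ) (φ := fun _ : Fin (k+1) => ℝ) 0) y :=
    by exact (ContinuousLinearMap.proj (R := ℝ) (φ := fun _ : Fin (k+1) => ℝ) 0).hasFDerivAt (x := y)
  have h2 : HasFDerivAt (fun y' : Fin (k+1) → ℝ => σ (tailL y'))
      ((fderiv ℝ σ (fun i => y i.succ)).comp tailL) y := by
    have := hσ.hasFDerivAt.comp y (tailL.hasFDerivAt (x := y))
    exact this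
  have := h1.smul h2
  exact this

lemma fderiv_coneMap_single_zero (σ : (Fin k → ℝ) → EuclideanSpace ℝ (Fin n))
    (y : Fin (k+1) → ℝ) (hσ : DifferentiableAt ℝ σ (fun i => y i.succ)) :
    fderiv ℝ (coneMap σ) y (Pi.single 0 1) = σ (fun i => y i.succ) := by
  rw [(hasFDerivAt_coneMap σ y hσ).fderiv]
  have h1 : tailL (Pi.single (0 : Fin (k+1)) (1:ℝ)) = 0 := by
    ext i
    simp [Pi.single_apply, (Fin.succ_ne_zero i)]
  simp [h1]

lemma fderiv_coneMap_single_succ (σ : (Fin k → ℝ) → EuclideanSpace ℝ (Fin n))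
    (y : Fin (k+1) → ℝ) (hσ : DifferentiableAt ℝ σ (fun i => y i.succ)) (j : Fin k) :
    fderiv ℝ (coneMap σ) y (Pi.single j.succ 1) =
      (y 0) • (fderiv ℝ σ (fun i => y i.succ) (Pi.single j 1)) := by
  rw [(hasFDerivAt_coneMap σ y hσ).fderiv]
  have h1 : tailL (Pi.single (j.succ : Fin (k+1)) (1:ℝ)) = Pi.single j 1 := by
    ext i
    simp [Pi.single_apply, Fin.succ_inj]
  have h2 : (Pi.single j.succ 1 : Fin (k+1) → ℝ) 0 = 0 := by
    rw [Pi.single_apply, if_neg (Fin.succ_ne_zero j).symm]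
  simp [h1, h2]

lemma diff_of_coneMap_diff (σ : (Fin k → ℝ) → EuclideanSpace ℝ (Fin n))
    (y : Fin (k+1) → ℝ) (hy : y 0 ≠ 0) (h : DifferentiableAt ℝ (coneMap σ) y) :
    DifferentiableAt ℝ σ (fun i => y i.succ) := by
  have hcons : ∀ x : Fin k → ℝ, σ x = (y 0)⁻¹ • coneMap σ (Fin.cons (y 0) x) := by
    intro x
    have h0 : (Fin.cons (y 0) x : Fin (k+1) → ℝ) 0 = y 0 := rfl
    have ht : (fun i => (Fin.cons (y 0) x : Fin (k+1) → ℝ) i.succ) = x := by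
      ext i; simp
    rw [coneMap, h0, ht, smul_smul, inv_mul_cancel₀ hy, one_smul]
  have hconsdiff : DifferentiableAt ℝ (fun x : Fin k → ℝ => (Fin.cons (y 0) x : Fin (k+1) → ℝ))
      (fun i => y i.succ) := by
    apply differentiableAt_pi.mpr
    intro i
    refine Fin.cases ?_ ?_ i
    · simp only [Fin.cons_zero]
      exact differentiableAt_const (y 0)
    · intro j
      simp only [Fin.cons_succ]
      exact differentiableAt_apply (𝕜 := ℝ) j _
  have : DifferentiableAt ℝ (fun x : Fin k → ℝ => (y 0)⁻¹ • coneMap σ (Fin.cons (y 0) x))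
      (fun i => y i.succ) := by
    apply DifferentiableAt.const_smul (f := fun x : Fin k → ℝ => coneMap σ (Fin.cons (y 0) x)) (c := (y 0)⁻¹)
    show DifferentiableAt ℝ ((coneMap σ) ∘ fun x : Fin k → ℝ => (Fin.cons (y 0) x : Fin (k+1) → ℝ)) _
    apply DifferentiableAt.comp
    · have hc : (Fin.cons (y 0) (fun i => y i.succ) : Fin (k+1) → ℝ) = y :=
        Fin.cons_self_tail y
      rw [hc]
      exact h
    · exact hconsdiff
  exact this.congr_of_eventuallyEq (Filter.Eventually.of_forall fun x => hcons x)

/-! ### pointwise bound -/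

lemma pointwise_bound (σ : (Fin k → ℝ) → EuclideanSpace ℝ (Fin n)) (D : ℝ) (hD : 0 ≤ D)
    (hσball : σ '' stdCone k ⊆ Metric.closedBall 0 D)
    (y : Fin (k+1) → ℝ) (hy : y ∈ coneDomain k) (hy0 : y 0 ≠ 0) :
    jacNorm (fderiv ℝ (coneMap σ) y) ≤ D * jacNorm (fderiv ℝ σ (fun i => y i.succ)) := by
  by_cases hconediff : DifferentiableAt ℝ (coneMap σ) y
  · have hdσ := diff_of_coneMap_diff σ y hy0 hconediff
    set x : Fin k → ℝ := fun i => y i.succ with hx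
    set v : Fin (k+1) → EuclideanSpace ℝ (Fin n) :=
      fun i => fderiv ℝ (coneMap σ) y (Pi.single i 1) with hv
    set w : Fin k → EuclideanSpace ℝ (Fin n) :=
      fun j => fderiv ℝ σ x (Pi.single j 1) with hws
    have hv0 : v 0 = σ x := fderiv_coneMap_single_zero σ y hdσ
    have hvs : ∀ j : Fin k, v j.succ = (y 0) • w j := fun j =>
      fderiv_coneMap_single_succ σ y hdσ j
    have hgs : (gram fun j : Fin k => v j.succ) = ((y 0) ^ 2) • gram w := by
      ext i j
      simp only [gram, Matrix.of_apply, hvs, Matrix.smul_apply, smul_eq_mul]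
      rw [real_inner_smul_left, real_inner_smul_right]
      ring
    have hkey : (gram v).det ≤ ‖σ x‖ ^ 2 * (((y 0) ^ 2) ^ k * (gram w).det) := by
      have := det_gram_cons_le v
      rw [hv0] at this
      rw [hgs, Matrix.det_smul] at this
      simpa [smul_eq_mul] using this
    have hσxD : ‖σ x‖ ≤ D := by
      have : σ x ∈ Metric.closedBall 0 D := hσball ⟨x, hy.2, rfl⟩
      simpa [Metric.mem_closedBall, dist_zero_right] using this
    have hy01 : 0 ≤ y 0 := hy.1.1
    have hy1 : y 0 ≤ 1 := hy.1.2
    have hdw : (0:ℝ) ≤ (gram w).det := det_gram_nonneg w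
    calc jacNorm (fderiv ℝ (coneMap σ) y)
        = Real.sqrt (gram v).det := by rw [jacNorm_eq]
      _ ≤ Real.sqrt (‖σ x‖ ^ 2 * (((y 0) ^ 2) ^ k * (gram w).det)) := Real.sqrt_le_sqrt hkey
      _ = ‖σ x‖ * ((y 0) ^ k * Real.sqrt (gram w).det) := by
          rw [Real.sqrt_mul (sq_nonneg _), Real.sqrt_sq (norm_nonneg _),
            Real.sqrt_mul (by positivity), ← pow_mul, mul_comm 2 k, pow_mul,
            Real.sqrt_sq (by positivity)]
      _ ≤ D * (1 * Real.sqrt (gram w).det) := by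
          apply mul_le_mul hσxD _ (by positivity) hD
          apply mul_le_mul_of_nonneg_right _ (Real.sqrt_nonneg _)
          exact pow_le_one₀ hy01 hy1
      _ = D * jacNorm (fderiv ℝ σ x) := by rw [one_mul, jacNorm_eq]
  · rw [fderiv_zero_of_not_differentiableAt hconediff, jacNorm_zero_succ]
    exact mul_nonneg hD (jacNorm_nonneg _)

end StmtAux

namespace StmtAux

variable {k n : ℕ}

lemma convex_stdCone : Convex ℝ (stdCone k) := by
  intro x hx y hy a b ha hb hab
  constructor
  · intro i
    have := hx.1 i
    have := hy.1 i
    simp only [Pi.add_apply, Pi.smul_apply, smul_eq_mul]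
    nlinarith
  · simp only [Pi.add_apply, Pi.smul_apply, smul_eq_mul]
    rw [Finset.sum_add_distrib, ← Finset.mul_sum, ← Finset.mul_sum]
    nlinarith [hx.2, hy.2, Finset.sum_nonneg fun i (_ : i ∈ Finset.univ) => hx.1 i,
      Finset.sum_nonneg fun i (_ : i ∈ Finset.univ) => hy.1 i]

lemma isClosed_stdCone : IsClosed (stdCone k) := by
  have h1 : IsClosed {x : Fin k → ℝ | ∀ i, 0 ≤ x i} := by
    have : {x : Fin k → ℝ | ∀ i, 0 ≤ x i} = ⋂ i, {x | 0 ≤ x i} := by ext; simp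
    rw [this]
    exact isClosed_iInter fun i => isClosed_le continuous_const (continuous_apply i)
  have h2 : IsClosed {x : Fin k → ℝ | ∑ i, x i ≤ 1} :=
    isClosed_le (by continuity) continuous_const
  exact h1.inter h2

lemma measurableSet_stdCone : MeasurableSet (stdCone k) :=
  isClosed_stdCone.measurableSet

lemma stdCone_subset_pi : stdCone k ⊆ Set.univ.pi fun _ => Set.Icc (0:ℝ) 1 := by
  intro x hx i _
  refine ⟨hx.1 i, ?_⟩
  calc x i ≤ ∑ j, x j := Finset.single_le_sum (fun j _ => hx.1 j) (Finset.mem_univ i)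
    _ ≤ 1 := hx.2

lemma volume_stdCone_le : volume (stdCone k) ≤ 1 := by
  calc volume (stdCone k) ≤ volume (Set.univ.pi fun _ : Fin k => Set.Icc (0:ℝ) 1) :=
        measure_mono stdCone_subset_pi
    _ = 1 := by
        rw [volume_pi_pi]
        simp

lemma volume_frontier_stdCone : volume (frontier (stdCone k)) = 0 :=
  (convex_stdCone).addHaar_frontier volume

lemma measurableSet_coneDomain : MeasurableSet (coneDomain k) := by
  have h1 : MeasurableSet {y : Fin (k+1) → ℝ | y 0 ∈ Set.Icc (0:ℝ) 1} :=
    (measurable_pi_apply 0) measurableSet_Icc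
  have h2 : MeasurableSet {y : Fin (k+1) → ℝ | (fun i => y i.succ) ∈ stdCone k} := by
    apply MeasurableSet.preimage measurableSet_stdCone
    exact measurable_pi_iff.mpr fun i => measurable_pi_apply i.succ
  exact h1.inter h2

lemma measurable_jac_fderiv (σ : (Fin k → ℝ) → EuclideanSpace ℝ (Fin n)) :
    Measurable fun x => jacNorm (fderiv ℝ σ x) :=
  continuous_jacNorm.measurable.comp (measurable_fderiv ℝ σ)

end StmtAux

set_option maxHeartbeats 2000000 in
open StmtAux in
theorem stmt_6 (n k : ℕ) (D : ℝ) (hD : 0 ≤ D)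
    (σ : (Fin k → ℝ) → EuclideanSpace ℝ (Fin n)) (K : NNReal)
    (hσlip : LipschitzOnWith K σ (stdCone k))
    (hσball : σ '' stdCone k ⊆ Metric.closedBall 0 D) :
    (∫ y in coneDomain k, jacNorm (fderiv ℝ (coneMap σ) y)) ≤ D * simplexMass σ ∧
      coneMap σ '' coneDomain k ⊆ Metric.closedBall 0 D := by
  classical
  constructor
  · -- the mass bound
    set C : ℝ := Real.sqrt ((k.factorial : ℝ) * (K:ℝ) ^ (2*k)) with hCdef
    have hC0 : 0 ≤ C := Real.sqrt_nonneg _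
    have hbound : ∀ x ∈ interior (stdCone k), jacNorm (fderiv ℝ σ x) ≤ C := by
      intro x hx
      exact jacNorm_le _ _ K.coe_nonneg
        (norm_fderiv_le_of_lipschitzOn ℝ (mem_interior_iff_mem_nhds.mp hx) hσlip)
    set e := MeasurableEquiv.piFinSuccAbove (fun _ : Fin (k+1) => ℝ) 0 with he
    have hmp := volume_preserving_piFinSuccAbove (fun _ : Fin (k+1) => ℝ) 0
    have he1 : ∀ y : Fin (k+1) → ℝ, (e y).1 = y 0 := fun y => rfl
    have he2 : ∀ (y : Fin (k+1) → ℝ) (j : Fin k), (e y).2 j = y j.succ := by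
      intro y j
      show y (Fin.succAbove 0 j) = y j.succ
      rw [Fin.zero_succAbove]
    have he2' : ∀ y : Fin (k+1) → ℝ, (e y).2 = fun j => y j.succ := fun y =>
      funext fun j => he2 y j
    set S : Set (ℝ × (Fin k → ℝ)) := Set.Icc (0:ℝ) 1 ×ˢ stdCone k with hSdef
    have hSm : MeasurableSet S := measurableSet_Icc.prod measurableSet_stdCone
    have hpre : coneDomain k = e ⁻¹' S := by
      ext y
      simp only [Set.mem_preimage, hSdef, Set.mem_prod, he1, he2', coneDomain, Set.mem_setOf_eq]
    set g : ℝ × (Fin k → ℝ) → ℝ := fun p => D * jacNorm (fderiv ℝ σ p.2) with hgdef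
    have hgmeas : Measurable g :=
      measurable_const.mul ((measurable_jac_fderiv σ).comp measurable_snd)
    have hSlt : (volume : Measure (ℝ × (Fin k → ℝ))) S < ⊤ := by
      rw [Measure.volume_eq_prod, hSdef, Measure.prod_prod]
      calc volume (Set.Icc (0:ℝ) 1) * volume (stdCone k) ≤ 1 * 1 := by
            apply mul_le_mul' _ volume_stdCone_le
            rw [Real.volume_Icc]
            simp
        _ < ⊤ := by simp
    have hae : ∀ᵐ p ∂((volume : Measure (ℝ × (Fin k → ℝ))).restrict S), ‖g p‖ ≤ D * C := by
      have hnull : (volume : Measure (ℝ × (Fin k → ℝ)))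
          {p : ℝ × (Fin k → ℝ) | p.2 ∈ stdCone k \ interior (stdCone k)} = 0 := by
        have hset : {p : ℝ × (Fin k → ℝ) | p.2 ∈ stdCone k \ interior (stdCone k)} =
            Set.univ ×ˢ (stdCone k \ interior (stdCone k)) := by
          ext p; simp
        rw [hset, Measure.volume_eq_prod, Measure.prod_prod]
        have hintsub : stdCone k \ interior (stdCone k) ⊆ frontier (stdCone k) := by
          rw [frontier, isClosed_stdCone.closure_eq]
        have : volume (stdCone k \ interior (stdCone k)) = 0 :=
          measure_mono_null hintsub volume_frontier_stdCone
        rw [this, mul_zero]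
      have hmm : ∀ᵐ p ∂((volume : Measure (ℝ × (Fin k → ℝ))).restrict S),
          p.2 ∉ stdCone k \ interior (stdCone k) := by
        apply ae_restrict_of_ae
        rw [ae_iff]
        simpa using hnull
      filter_upwards [hmm, ae_restrict_mem hSm] with p hp hpS
      have hp2 : p.2 ∈ interior (stdCone k) := by
        by_contra hcon
        exact hp ⟨hpS.2, hcon⟩
      have hjn : 0 ≤ jacNorm (fderiv ℝ σ p.2) := jacNorm_nonneg _
      rw [hgdef]
      simp only [Real.norm_eq_abs]
      rw [abs_of_nonneg (mul_nonneg hD hjn)]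
      exact mul_le_mul_of_nonneg_left (hbound _ hp2) hD
    have hInt : IntegrableOn g S volume := by
      have hconst : IntegrableOn (fun _ : ℝ × (Fin k → ℝ) => D * C) S volume :=
        integrableOn_const hSlt.ne
      exact Integrable.mono' hconst hgmeas.aestronglyMeasurable.restrict hae
    have hg_int_eq : (∫ p in S, g p) = D * simplexMass σ := by
      have hInt' : IntegrableOn g S (volume.prod volume) := by
        rwa [Measure.volume_eq_prod] at hInt
      rw [Measure.volume_eq_prod, hSdef, setIntegral_prod g (by rwa [← hSdef])]
      have hinner : ∀ t : ℝ, (∫ x in stdCone k, g (t, x)) = D * simplexMass σ := by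
        intro t
        rw [simplexMass, ← integral_const_mul]
      simp_rw [hinner]
      rw [setIntegral_const, Measure.real, Real.volume_Icc, sub_zero, ENNReal.ofReal_one,
        ENNReal.toReal_one, one_smul]
    -- transfer to the cone domain
    have h_transfer : (∫ y in coneDomain k, g (e y)) = ∫ p in S, g p := by
      rw [hpre]
      exact hmp.setIntegral_preimage_emb e.measurableEmbedding g S
    have hConeFin : (volume : Measure (Fin (k+1) → ℝ)) (coneDomain k) < ⊤ := by
      have hsub : coneDomain k ⊆ Set.univ.pi fun _ : Fin (k+1) => Set.Icc (0:ℝ) 1 := by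
        intro y hy i _
        refine Fin.cases ?_ ?_ i
        · exact hy.1
        · intro j
          exact stdCone_subset_pi hy.2 j (Set.mem_univ j)
      calc volume (coneDomain k) ≤ volume (Set.univ.pi fun _ : Fin (k+1) => Set.Icc (0:ℝ) 1) :=
            measure_mono hsub
        _ = 1 := by rw [volume_pi_pi]; simp
        _ < ⊤ := by simp
    have hIntCone : IntegrableOn (fun y => g (e y)) (coneDomain k) volume := by
      have hconst : IntegrableOn (fun _ : Fin (k+1) → ℝ => D * C) (coneDomain k) volume :=
        integrableOn_const hConeFin.ne
      have hmeas2 : Measurable fun y : Fin (k+1) → ℝ => g (e y) := by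
        apply measurable_const.mul
        apply (measurable_jac_fderiv σ).comp
        exact (measurable_pi_iff.mpr fun i => measurable_pi_apply i.succ)
      have haec : ∀ᵐ y ∂((volume : Measure (Fin (k+1) → ℝ)).restrict (coneDomain k)),
          ‖g (e y)‖ ≤ D * C := by
        have hnullc : (volume : Measure (Fin (k+1) → ℝ))
            {y | (fun i => y i.succ) ∈ stdCone k \ interior (stdCone k)} = 0 := by
          have hset : {y : Fin (k+1) → ℝ | (fun i => y i.succ) ∈ stdCone k \ interior (stdCone k)}
              = e ⁻¹' (Set.univ ×ˢ (stdCone k \ interior (stdCone k))) := by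
            ext y
            simp [he2']
          rw [hset, hmp.measure_preimage ((MeasurableSet.univ.prod
            (measurableSet_stdCone.diff isOpen_interior.measurableSet)).nullMeasurableSet)]
          rw [Measure.volume_eq_prod, Measure.prod_prod]
          have : volume (stdCone k \ interior (stdCone k)) = 0 := by
            apply measure_mono_null _ volume_frontier_stdCone
            rw [frontier, isClosed_stdCone.closure_eq]
          rw [this, mul_zero]
        have hmm : ∀ᵐ y ∂((volume : Measure (Fin (k+1) → ℝ)).restrict (coneDomain k)),
            (fun i => y i.succ) ∉ stdCone k \ interior (stdCone k) := by
          apply ae_restrict_of_ae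
          rw [ae_iff]
          simpa using hnullc
        filter_upwards [hmm, ae_restrict_mem measurableSet_coneDomain] with y hy hyc
        have hy2 : (fun i => y i.succ) ∈ interior (stdCone k) := by
          by_contra hcon
          exact hy ⟨hyc.2, hcon⟩
        have hge : g (e y) = D * jacNorm (fderiv ℝ σ fun i => y i.succ) := by
          rw [hgdef]; simp only [he2']
        rw [hge, Real.norm_eq_abs,
          abs_of_nonneg (mul_nonneg hD (jacNorm_nonneg _))]
        exact mul_le_mul_of_nonneg_left (hbound _ hy2) hD
      exact Integrable.mono' hconst hmeas2.aestronglyMeasurable.restrict haec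
    have hN : (volume : Measure (Fin (k+1) → ℝ)) {y | y 0 = 0} = 0 := by
      have hset : {y : Fin (k+1) → ℝ | y 0 = 0} = e ⁻¹' ({(0:ℝ)} ×ˢ (Set.univ : Set (Fin k → ℝ))) := by
        ext y
        simp only [Set.mem_preimage, Set.mem_prod, Set.mem_singleton_iff, Set.mem_univ,
          and_true, Set.mem_setOf_eq, he1]
      rw [hset, hmp.measure_preimage
        (((measurableSet_singleton (0:ℝ)).prod MeasurableSet.univ).nullMeasurableSet)]
      rw [Measure.volume_eq_prod, Measure.prod_prod]
      simp
    have hle : (fun y => jacNorm (fderiv ℝ (coneMap σ) y)) ≤ᵐ[volume.restrict (coneDomain k)]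
        fun y => g (e y) := by
      rw [Filter.EventuallyLE, ae_restrict_iff' measurableSet_coneDomain]
      have hae0 : ∀ᵐ y ∂(volume : Measure (Fin (k+1) → ℝ)), y 0 ≠ 0 := by
        rw [ae_iff]
        simpa using hN
      filter_upwards [hae0] with y hy0 hy
      have := pointwise_bound σ D hD hσball y hy hy0
      have hge : g (e y) = D * jacNorm (fderiv ℝ σ fun i => y i.succ) := by
        rw [hgdef]
        simp only [he2']
      rw [hge]
      exact this
    calc (∫ y in coneDomain k, jacNorm (fderiv ℝ (coneMap σ) y))
        ≤ ∫ y in coneDomain k, g (e y) :=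
          integral_mono_of_nonneg (Filter.Eventually.of_forall fun y => jacNorm_nonneg _)
            hIntCone hle
      _ = ∫ p in S, g p := h_transfer
      _ = D * simplexMass σ := hg_int_eq
  · rintro z ⟨y, hy, rfl⟩
    rw [Metric.mem_closedBall, dist_zero_right, coneMap, norm_smul, Real.norm_eq_abs,
      abs_of_nonneg hy.1.1]
    have h1 : ‖σ fun i => y i.succ‖ ≤ D := by
      have : σ (fun i => y i.succ) ∈ Metric.closedBall 0 D := hσball ⟨_, hy.2, rfl⟩
      simpa [Metric.mem_closedBall, dist_zero_right] using this
    calc y 0 * ‖σ fun i => y i.succ‖ ≤ 1 * D :=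
          mul_le_mul hy.1.2 h1 (norm_nonneg _) zero_le_one
      _ = D := one_mul D
end

section
/- Let (e_I)_I and (f_I)_I be two families of vectors in an inner product space indexed by a finite totally ordered set, with (e_I) orthonormal, and suppose f_I = e_I + ∑_{J > I} a_{IJ} e_J with |a_{IJ}| ≤ A for all I, J. Then for every vector v = ∑ c_I f_I one has ‖v‖ ≥ (1 + mA)^{-m} · (∑ c_I²)^{1/2} and ‖v‖ ≤ (1 + mA) · (∑ c_I²)^{1/2}, where m is the cardinality of the index set. -/
set_option maxHeartbeats 1600000

theorem stmt_12 (E : Type*) [NormedAddCommGroup E] [InnerProductSpace ℝ E]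
    (ι : Type*) [Fintype ι] [LinearOrder ι]
    (e f : ι → E) (he : Orthonormal ℝ e) (a : ι → ι → ℝ) (A : ℝ) (hA : 0 ≤ A)
    (hf : ∀ I, f I = e I + ∑ J ∈ Finset.univ.filter (fun J => I < J), a I J • e J)
    (ha : ∀ I J, |a I J| ≤ A) (c : ι → ℝ) :
    ((1 + (Fintype.card ι : ℝ) * A) ^ (Fintype.card ι))⁻¹ * Real.sqrt (∑ I, c I ^ 2) ≤
        ‖∑ I, c I • f I‖ ∧
      ‖∑ I, c I • f I‖ ≤ (1 + (Fintype.card ι : ℝ) * A) * Real.sqrt (∑ I, c I ^ 2) := by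
  classical
  set m : ℕ := Fintype.card ι with hmdef
  set B : ℝ := 1 + (m : ℝ) * A with hBdef
  have hmA : (0:ℝ) ≤ (m:ℝ) * A := by positivity
  have hB1 : (1:ℝ) ≤ B := le_add_of_nonneg_right hmA
  have hB0 : (0:ℝ) < B := lt_of_lt_of_le one_pos hB1
  set d : ι → ℝ := fun J => c J + ∑ I ∈ Finset.univ.filter (fun I => I < J), a I J * c I
    with hddef
  set T : ι → ℝ := fun J => ∑ I ∈ Finset.univ.filter (fun I => I < J), a I J * c I with hTdef
  have hdT : ∀ J, d J = c J + T J := fun J => rfl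
  clear_value T d
  clear_value m B
  -- rewrite the vector in terms of the orthonormal family
  have hsum : ∑ I, c I • f I = ∑ J, d J • e J := by
    have h1 : ∀ J, d J • e J
        = c J • e J + ∑ I ∈ Finset.univ.filter (fun I => I < J), (a I J * c I) • e J := by
      intro J
      simp [hddef, add_smul, Finset.sum_smul]
    simp only [hf, smul_add, Finset.sum_add_distrib, h1]
    congr 1
    simp only [Finset.smul_sum, Finset.sum_filter]
    rw [Finset.sum_comm]
    refine Finset.sum_congr rfl fun J _ => Finset.sum_congr rfl fun I _ => ?_
    split
    · rw [smul_smul, mul_comm]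
    · exact smul_zero _
  have hnorm : ‖∑ I, c I • f I‖ = Real.sqrt (∑ J, d J ^ 2) := by
    rw [hsum]
    have h2 : ‖∑ J, d J • e J‖ ^ 2 = ∑ J, d J ^ 2 := by
      rw [← real_inner_self_eq_norm_sq, he.inner_sum d d]
      simp [sq]
    rw [← h2, Real.sqrt_sq (norm_nonneg _)]
  -- bound on T J squared
  have hT2 : ∀ J, T J ^ 2 ≤ (m : ℝ) * A ^ 2 * ∑ I, c I ^ 2 := by
    intro J
    have hcs := Finset.sum_mul_sq_le_sq_mul_sq (Finset.univ.filter (fun I => I < J))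
      (fun I => a I J) c
    have h1 : (∑ I ∈ Finset.univ.filter (fun I => I < J), a I J ^ 2)
        ≤ (m : ℝ) * A ^ 2 := by
      calc (∑ I ∈ Finset.univ.filter (fun I => I < J), a I J ^ 2)
          ≤ ∑ _I ∈ Finset.univ.filter (fun I => I < J), A ^ 2 := by
            refine Finset.sum_le_sum fun I _ => ?_
            have := ha I J
            nlinarith [abs_nonneg (a I J), sq_abs (a I J)]
        _ = (Finset.univ.filter (fun I => I < J)).card * A ^ 2 := by
            rw [Finset.sum_const, nsmul_eq_mul]
        _ ≤ (m : ℝ) * A ^ 2 := by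
            have hcard : (Finset.univ.filter (fun I => I < J)).card ≤ m :=
              Finset.card_le_card (Finset.subset_univ _) |>.trans_eq (by simp [hmdef])
            exact mul_le_mul_of_nonneg_right (by exact_mod_cast hcard) (by positivity)
    have h2 : (∑ I ∈ Finset.univ.filter (fun I => I < J), c I ^ 2) ≤ ∑ I, c I ^ 2 :=
      Finset.sum_le_sum_of_subset_of_nonneg (Finset.subset_univ _)
        (fun i _ _ => sq_nonneg _)
    have hTnn : (0:ℝ) ≤ ∑ I ∈ Finset.univ.filter (fun I => I < J), c I ^ 2 :=
      Finset.sum_nonneg fun i _ => sq_nonneg _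
    have hann : (0:ℝ) ≤ ∑ I ∈ Finset.univ.filter (fun I => I < J), a I J ^ 2 :=
      Finset.sum_nonneg fun i _ => sq_nonneg _
    calc T J ^ 2 = (∑ I ∈ Finset.univ.filter (fun I => I < J), a I J * c I) ^ 2 := by
          simp only [hTdef]
      _ ≤ (∑ I ∈ Finset.univ.filter (fun I => I < J), a I J ^ 2)
          * ∑ I ∈ Finset.univ.filter (fun I => I < J), c I ^ 2 := hcs
      _ ≤ (m : ℝ) * A ^ 2 * ∑ I, c I ^ 2 := by
          apply mul_le_mul h1 h2 hTnn (by positivity)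
  have hScnn : (0:ℝ) ≤ ∑ I, c I ^ 2 := Finset.sum_nonneg fun i _ => sq_nonneg _
  have hSdnn : (0:ℝ) ≤ ∑ I, d I ^ 2 := Finset.sum_nonneg fun i _ => sq_nonneg _
  constructor
  · -- lower bound: sqrt(∑ c²) ≤ B^m * sqrt(∑ d²)
    -- key induction over lower sets
    have main : ∀ n (s : Finset ι), s.card = n → (∀ i ∈ s, ∀ j, j < i → j ∈ s) →
        (∑ I ∈ s, c I ^ 2) ≤ (B ^ 2) ^ s.card * ∑ I ∈ s, d I ^ 2 := by
      intro n
      induction n with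
      | zero => intro s hs _; rw [Finset.card_eq_zero.mp hs]; simp
      | succ k ih =>
        intro s hs hlow
        have hne : s.Nonempty := Finset.card_pos.mp (hs ▸ Nat.succ_pos k)
        set J := s.max' hne with hJ
        have hJs : J ∈ s := s.max'_mem hne
        set s' := s.erase J with hs'
        have hcard' : s'.card = k := by
          rw [hs', Finset.card_erase_of_mem hJs, hs]
          omega
        have hlow' : ∀ i ∈ s', ∀ j, j < i → j ∈ s' := by
          intro i hi j hj
          have his : i ∈ s := Finset.mem_of_mem_erase hi
          have hjs : j ∈ s := hlow i his j hj
          refine Finset.mem_erase.mpr ⟨?_, hjs⟩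
          have : i ≤ J := s.le_max' i his
          exact ne_of_lt (lt_of_lt_of_le hj this)
        have hfilter : Finset.univ.filter (fun I => I < J) = s' := by
          ext I
          simp only [Finset.mem_filter, Finset.mem_univ, true_and, hs', Finset.mem_erase]
          constructor
          · intro h; exact ⟨ne_of_lt h, hlow J hJs I h⟩
          · rintro ⟨hne', hIs⟩
            exact lt_of_le_of_ne (s.le_max' I hIs) hne'
        have IH := ih s' hcard' hlow'
        rw [hcard'] at IH
        -- split sums
        have hsplit_c : ∑ I ∈ s, c I ^ 2 = c J ^ 2 + ∑ I ∈ s', c I ^ 2 := by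
          rw [hs', ← Finset.add_sum_erase _ _ hJs]
        have hsplit_d : ∑ I ∈ s, d I ^ 2 = d J ^ 2 + ∑ I ∈ s', d I ^ 2 := by
          rw [hs', ← Finset.add_sum_erase _ _ hJs]
        set Sc := ∑ I ∈ s', c I ^ 2 with hSc
        set Sd := ∑ I ∈ s', d I ^ 2 with hSd
        have hScnn' : (0:ℝ) ≤ Sc := Finset.sum_nonneg fun i _ => sq_nonneg _
        have hSdnn' : (0:ℝ) ≤ Sd := Finset.sum_nonneg fun i _ => sq_nonneg _
        clear_value Sc Sd
        -- T J bound restricted to s'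
        have hTs : T J ^ 2 ≤ (m:ℝ) * A ^ 2 * Sc := by
          have hcs := Finset.sum_mul_sq_le_sq_mul_sq s' (fun I => a I J) c
          have h1 : (∑ I ∈ s', a I J ^ 2) ≤ (m : ℝ) * A ^ 2 := by
            calc (∑ I ∈ s', a I J ^ 2) ≤ ∑ _I ∈ s', A ^ 2 := by
                  refine Finset.sum_le_sum fun I _ => ?_
                  have := ha I J
                  nlinarith [abs_nonneg (a I J), sq_abs (a I J)]
              _ = s'.card * A ^ 2 := by rw [Finset.sum_const, nsmul_eq_mul]
              _ ≤ (m : ℝ) * A ^ 2 := by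
                  have hcard : s'.card ≤ m := by
                    exact (Finset.card_le_card (Finset.subset_univ _)).trans_eq (by simp [hmdef])
                  exact mul_le_mul_of_nonneg_right (by exact_mod_cast hcard) (by positivity)
          calc T J ^ 2 = (∑ I ∈ s', a I J * c I) ^ 2 := by
                simp only [hTdef]; rw [hfilter]
            _ ≤ (∑ I ∈ s', a I J ^ 2) * Sc := by rw [hSc]; exact hcs
            _ ≤ (m:ℝ) * A ^ 2 * Sc := mul_le_mul_of_nonneg_right h1 hScnn'
        have hcJ : c J = d J - T J := by rw [hdT]; ring
        have hm1 : (1:ℝ) ≤ (m:ℝ) := by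
          have : 1 ≤ m := by
            rw [hmdef]
            exact Fintype.card_pos_iff.mpr ⟨J⟩
          exact_mod_cast this
        -- core inequality: c J ^ 2 + Sc ≤ B^2 * (d J ^ 2 + Sc)
        have hcore : c J ^ 2 + Sc ≤ B ^ 2 * (d J ^ 2 + Sc) := by
          rw [hcJ, hBdef]
          rcases eq_or_lt_of_le hA with hA0 | hA0
          · have hT0 : T J = 0 := by
              have : T J ^ 2 ≤ 0 := by rw [← hA0] at hTs; nlinarith [hTs]
              nlinarith [sq_nonneg (T J)]
            rw [hT0, ← hA0]
            ring_nf
            nlinarith [hScnn', sq_nonneg (d J)]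
          · have hP : (0:ℝ) < (m:ℝ) * A := by nlinarith
            have h2 : (m:ℝ) * A ^ 2 * Sc ≤ ((m:ℝ) * A) ^ 2 * Sc := by
              nlinarith [mul_nonneg (mul_nonneg hA hA) hScnn', hm1,
                mul_nonneg (mul_nonneg (mul_nonneg (zero_le_one.trans hm1) hA) hA) hScnn']
            have h3 : ((m:ℝ) * A) * ((m:ℝ) * A ^ 2 * Sc) ≤ ((m:ℝ) * A) ^ 3 * Sc := by
              nlinarith [mul_nonneg (mul_nonneg (mul_nonneg hmA hA) hA) hScnn', hm1,
                mul_nonneg (mul_nonneg (mul_nonneg (mul_nonneg hmA hmA) hA) hA) hScnn']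
            have h4 : ((m:ℝ) * A) * T J ^ 2 ≤ ((m:ℝ) * A) * ((m:ℝ) * A ^ 2 * Sc) :=
              mul_le_mul_of_nonneg_left hTs hP.le
            nlinarith [sq_nonneg ((m:ℝ) * A * d J + T J), sq_nonneg (d J), sq_nonneg (T J),
              h2, h3, h4, hTs, hScnn', hm1, hP,
              mul_nonneg hmA hScnn', mul_pos hP hP,
              mul_nonneg (mul_nonneg hmA hmA) (sq_nonneg (d J))]
        have hB2 : (1:ℝ) ≤ B ^ 2 := by nlinarith
        have hBk1 : (1:ℝ) ≤ (B ^ 2) ^ k := one_le_pow₀ hB2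
        rw [hsplit_c, hsplit_d, hs]
        calc c J ^ 2 + Sc ≤ B ^ 2 * (d J ^ 2 + Sc) := hcore
          _ ≤ B ^ 2 * (d J ^ 2 + (B ^ 2) ^ k * Sd) :=
              mul_le_mul_of_nonneg_left (add_le_add_right IH _) (sq_nonneg B)
          _ = B ^ 2 * d J ^ 2 + (B ^ 2) ^ k * B ^ 2 * Sd := by ring
          _ ≤ (B ^ 2) ^ k * B ^ 2 * d J ^ 2 + (B ^ 2) ^ k * B ^ 2 * Sd := by
              have := mul_le_mul_of_nonneg_right hBk1
                (mul_nonneg (sq_nonneg B) (sq_nonneg (d J)))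
              nlinarith
          _ = (B ^ 2) ^ (k + 1) * (d J ^ 2 + Sd) := by rw [pow_succ]; ring
    have huniv := main m Finset.univ (by simp [hmdef]) (fun i _ j _ => Finset.mem_univ j)
    rw [Finset.card_univ, ← hmdef] at huniv
    have hsqrt : Real.sqrt (∑ I, c I ^ 2) ≤ B ^ m * Real.sqrt (∑ I, d I ^ 2) := by
      have h1 : Real.sqrt (∑ I, c I ^ 2) ≤ Real.sqrt ((B ^ 2) ^ m * ∑ I, d I ^ 2) :=
        Real.sqrt_le_sqrt huniv
      have h2 : Real.sqrt ((B ^ 2) ^ m * ∑ I, d I ^ 2)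
          = B ^ m * Real.sqrt (∑ I, d I ^ 2) := by
        rw [Real.sqrt_mul (by positivity)]
        congr 1
        rw [← pow_mul, mul_comm 2 m, pow_mul, Real.sqrt_sq (by positivity)]
      rw [← h2]; exact h1
    rw [hnorm]
    rw [inv_mul_le_iff₀ (by positivity)]
    calc Real.sqrt (∑ I, c I ^ 2) ≤ B ^ m * Real.sqrt (∑ I, d I ^ 2) := hsqrt
      _ = B ^ m * Real.sqrt (∑ J, d J ^ 2) := rfl
  · -- upper bound
    rw [hnorm]
    have key : (∑ J, d J ^ 2) ≤ B ^ 2 * ∑ I, c I ^ 2 := by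
      have hST : (∑ J, T J ^ 2) ≤ (m:ℝ) ^ 2 * A ^ 2 * ∑ I, c I ^ 2 := by
        calc (∑ J, T J ^ 2) ≤ ∑ _J : ι, (m : ℝ) * A ^ 2 * ∑ I, c I ^ 2 :=
              Finset.sum_le_sum fun J _ => hT2 J
          _ = (m:ℝ) * ((m : ℝ) * A ^ 2 * ∑ I, c I ^ 2) := by
              rw [Finset.sum_const, nsmul_eq_mul, Finset.card_univ, hmdef]
          _ = (m:ℝ) ^ 2 * A ^ 2 * ∑ I, c I ^ 2 := by ring
      have hcT : (∑ J, c J * T J) ≤ (m:ℝ) * A * ∑ I, c I ^ 2 := by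
        have hcs := Finset.sum_mul_sq_le_sq_mul_sq Finset.univ c T
        have h1 : (∑ J, c J * T J) ^ 2 ≤ ((m:ℝ) * A * ∑ I, c I ^ 2) ^ 2 := by
          calc (∑ J, c J * T J) ^ 2 ≤ (∑ I, c I ^ 2) * ∑ J, T J ^ 2 := hcs
            _ ≤ (∑ I, c I ^ 2) * ((m:ℝ) ^ 2 * A ^ 2 * ∑ I, c I ^ 2) :=
                mul_le_mul_of_nonneg_left hST hScnn
            _ = ((m:ℝ) * A * ∑ I, c I ^ 2) ^ 2 := by ring
        nlinarith [mul_nonneg hmA hScnn]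
      have hexp : (∑ J, d J ^ 2) = (∑ J, c J ^ 2) + 2 * (∑ J, c J * T J) + ∑ J, T J ^ 2 := by
        rw [Finset.mul_sum, ← Finset.sum_add_distrib, ← Finset.sum_add_distrib]
        exact Finset.sum_congr rfl fun J _ => by rw [hdT]; ring
      rw [hexp, hBdef]
      nlinarith [hST, hcT, hScnn]
    calc Real.sqrt (∑ J, d J ^ 2) ≤ Real.sqrt (B ^ 2 * ∑ I, c I ^ 2) := Real.sqrt_le_sqrt key
      _ = B * Real.sqrt (∑ I, c I ^ 2) := by
          rw [Real.sqrt_mul (by positivity), Real.sqrt_sq (le_of_lt hB0)]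
end
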